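/- Let A be a unital Banach algebra and p, q ∈ A idempotents with ‖p − q‖ < 1. Then p and q are equivalent: there exist a, b ∈ A with p = ab and q = ba. Explicitly, with d = Σ_{n≥0} C(2n,n)(p − q)^{2n}/4ⁿ and c = d(p + q − 1), one has c² = 1, pc = cq, and a = pc, b = cp work. -/

import Mathlib

open Finset Nat

/-- Convolution identity for central binomial coefficients. -/
theorem sum_centralBinom_mul (n : ℕ) :
    ∑ k ∈ range (n + 1), centralBinom k * centralBinom (n - k) = 4 ^ n := by
  induction n with
  | zero => simp [centralBinom]
  | succ n ih =>
    set T : ℕ → ℕ := fun m => ∑ k ∈ range (m + 1), centralBinom k * centralBinom (m - k) with hT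
    have refl : ∀ m : ℕ, ∑ k ∈ range (m + 1), k * (centralBinom k * centralBinom (m - k))
        = ∑ k ∈ range (m + 1), (m - k) * (centralBinom k * centralBinom (m - k)) := by
      intro m
      conv_rhs => rw [← Finset.sum_range_reflect]
      apply Finset.sum_congr rfl
      intro k hk
      rw [Finset.mem_range] at hk
      have hk' : k ≤ m := Nat.lt_succ_iff.mp hk
      have e1 : m + 1 - 1 - k = m - k := by omega
      have e2 : m - (m - k) = k := by omega
      rw [e1, e2, Nat.mul_comm (centralBinom (m-k))]
    have key : ∀ m : ℕ, 2 * ∑ k ∈ range (m + 1), k * (centralBinom k * centralBinom (m - k))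
        = m * T m := by
      intro m
      have := refl m
      rw [two_mul]
      nth_rewrite 2 [this]
      rw [← Finset.sum_add_distrib, hT, Finset.mul_sum]
      apply Finset.sum_congr rfl
      intro k hk
      rw [Finset.mem_range] at hk
      rw [← add_mul]
      congr 1
      omega
    have step : ∑ k ∈ range (n + 2), k * (centralBinom k * centralBinom (n + 1 - k))
        = 4 * ∑ k ∈ range (n + 1), k * (centralBinom k * centralBinom (n - k)) + 2 * T n := by
      rw [Finset.sum_range_succ'
        (fun k => k * (centralBinom k * centralBinom (n + 1 - k)))]
      simp only [Nat.zero_mul, add_zero]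
      have : ∀ j ∈ range (n + 1), (j + 1) * (centralBinom (j + 1) * centralBinom (n + 1 - (j + 1)))
          = (4 * j + 2) * (centralBinom j * centralBinom (n - j)) := by
        intro j hj
        have hrec := Nat.succ_mul_centralBinom_succ j
        have : n + 1 - (j + 1) = n - j := by omega
        rw [this, ← Nat.mul_assoc, hrec]
        ring
      rw [Finset.sum_congr rfl this]
      rw [hT, Finset.mul_sum, Finset.mul_sum, ← Finset.sum_add_distrib]
      apply Finset.sum_congr rfl
      intro k hk
      ring
    have main : (n + 1) * T (n + 1) = 4 * ((n + 1) * T n) := by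
      calc (n + 1) * T (n + 1)
          = 2 * ∑ k ∈ range (n + 2), k * (centralBinom k * centralBinom (n + 1 - k)) :=
            (key (n + 1)).symm
        _ = 4 * (2 * ∑ k ∈ range (n + 1), k * (centralBinom k * centralBinom (n - k)))
            + 4 * T n := by rw [step]; ring
        _ = 4 * (n * T n) + 4 * T n := by rw [key n]
        _ = 4 * ((n + 1) * T n) := by ring
    have hTn : T n = 4 ^ n := ih
    have : (n + 1) * T (n + 1) = (n + 1) * 4 ^ (n + 1) := by
      rw [main, hTn]; ring
    have := Nat.eq_of_mul_eq_mul_left (Nat.succ_pos n) this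
    simpa [hT] using this

theorem centralBinom_le_four_pow (n : ℕ) : centralBinom n ≤ 4 ^ n := by
  have h1 : centralBinom n ≤ (2 * n + 1).choose n :=
    Nat.choose_le_choose n (by omega)
  exact h1.trans (Nat.choose_middle_le_pow n)

/-- Idempotents at distance less than one are equivalent; explicitly, with
`d = Σ C(2n,n)(p−q)^{2n}/4ⁿ` and `c = d(p+q−1)` one has `c² = 1`, `pc = cq`,
and `p = (pc)(cp)`, `q = (cp)(pc)`. -/
theorem idempotents_close_equiv {A : Type*} [NormedRing A] [NormOneClass A]
    [CompleteSpace A] [NormedAlgebra ℂ A]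
    (p q : A) (hp : p * p = p) (hq : q * q = q) (hpq : ‖p - q‖ < 1)
    (d c : A)
    (hd : d = ∑' n : ℕ, ((Nat.centralBinom n : ℂ) / 4 ^ n) • ((p - q) * (p - q)) ^ n)
    (hc : c = d * (p + q - 1)) :
    c * c = 1 ∧ p * c = c * q ∧
    p = (p * c) * (c * p) ∧ q = (c * p) * (p * c) := by
  set x : A := (p - q) * (p - q) with hxdef
  set a : ℕ → ℂ := fun n => (Nat.centralBinom n : ℂ) / 4 ^ n with hadef
  have hx1 : ‖x‖ < 1 := by
    have h0 : (0:ℝ) ≤ ‖p - q‖ := norm_nonneg _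
    calc ‖x‖ ≤ ‖p - q‖ * ‖p - q‖ := norm_mul_le _ _
      _ < 1 := by nlinarith
  -- norm bound on coefficients
  have hanorm : ∀ n, ‖a n‖ ≤ 1 := by
    intro n
    have h4 : (0:ℝ) < 4 ^ n := by positivity
    rw [hadef]
    simp only [norm_div, norm_pow, Complex.norm_natCast]
    have : ‖(4:ℂ)‖ = 4 := by norm_num [Complex.norm_ofNat]
    rw [this, div_le_one h4]
    exact_mod_cast _root_.centralBinom_le_four_pow n
  have hbound : ∀ n, ‖a n • x ^ n‖ ≤ ‖x‖ ^ n := by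
    intro n
    calc ‖a n • x ^ n‖ = ‖a n‖ * ‖x ^ n‖ := norm_smul _ _
      _ ≤ 1 * ‖x‖ ^ n := by
          apply mul_le_mul (hanorm n) (norm_pow_le _ n) (norm_nonneg _) zero_le_one
      _ = ‖x‖ ^ n := one_mul _
  have hgeom : Summable (fun n : ℕ => ‖x‖ ^ n) :=
    summable_geometric_of_lt_one (norm_nonneg x) hx1
  have hnorm : Summable (fun n : ℕ => ‖a n • x ^ n‖) :=
    Summable.of_nonneg_of_le (fun n => norm_nonneg _) hbound hgeom
  -- d * d = geometric series in x
  have hdd : d * d = ∑' n : ℕ, x ^ n := by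
    rw [hd, tsum_mul_tsum_eq_tsum_sum_antidiagonal_of_summable_norm hnorm hnorm]
    congr 1
    funext n
    have hterm : ∀ kl ∈ Finset.HasAntidiagonal.antidiagonal n,
        (a kl.1 • x ^ kl.1) * (a kl.2 • x ^ kl.2) = (a kl.1 * a kl.2) • x ^ n := by
      intro kl hkl
      rw [Finset.HasAntidiagonal.mem_antidiagonal] at hkl
      rw [smul_mul_smul_comm, ← pow_add, hkl]
    rw [Finset.sum_congr rfl hterm, ← Finset.sum_smul]
    have hscalar : ∑ kl ∈ Finset.HasAntidiagonal.antidiagonal n, a kl.1 * a kl.2 = 1 := by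
      rw [Finset.Nat.sum_antidiagonal_eq_sum_range_succ_mk]
      have heach : ∀ k ∈ range (n + 1),
          a k * a (n - k) = ((centralBinom k * centralBinom (n - k) : ℕ) : ℂ) / 4 ^ n := by
        intro k hk
        rw [Finset.mem_range] at hk
        have hk' : k ≤ n := Nat.lt_succ_iff.mp hk
        rw [hadef]
        simp only
        rw [_root_.div_mul_div_comm, ← pow_add]
        have : k + (n - k) = n := by omega
        rw [this]
        push_cast
        ring
      rw [Finset.sum_congr rfl heach, ← Finset.sum_div, ← Nat.cast_sum,
        sum_centralBinom_mul]
      have h4 : ((4:ℂ) ^ n) ≠ 0 := by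
        apply pow_ne_zero; norm_num
      rw [div_eq_one_iff_eq h4]
      push_cast
      ring
    rw [hscalar, one_smul]
  -- commutation
  have hxexp : x = p - p * q - q * p + q := by
    rw [hxdef]
    simp only [sub_mul, mul_sub, hp, hq]
    abel
  have hqpp : q * p * p = q * p := by rw [mul_assoc, hp]
  have hpqq : p * q * q = p * q := by rw [mul_assoc, hq]
  have hpx : p * x = x * p := by
    rw [hxexp]
    simp only [mul_sub, sub_mul, mul_add, add_mul, ← mul_assoc, hp, hq, hqpp, hpqq]
    abel
  have hqx : q * x = x * q := by
    rw [hxexp]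
    simp only [mul_sub, sub_mul, mul_add, add_mul, ← mul_assoc, hp, hq, hqpp, hpqq]
    abel
  have hsum : Summable (fun n : ℕ => a n • x ^ n) := hnorm.of_norm
  have hmuld : ∀ y : A, y * x = x * y → y * d = d * y := by
    intro y hy
    rw [hd, ← hsum.tsum_mul_left y, ← hsum.tsum_mul_right y]
    congr 1
    funext n
    have hyn : y * x ^ n = x ^ n * y := (Commute.pow_right hy n)
    rw [mul_smul_comm, hyn, ← smul_mul_assoc]
  have hpd : p * d = d * p := hmuld p hpx
  have hqd : q * d = d * q := hmuld q hqx
  have hsd : (p + q - 1) * d = d * (p + q - 1) := by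
    simp only [sub_mul, add_mul, mul_sub, mul_add, one_mul, mul_one, hpd, hqd]
  have hsquare : (p + q - 1) * (p + q - 1) = 1 - x := by
    rw [hxexp]
    simp only [mul_sub, sub_mul, mul_add, add_mul, mul_one, one_mul, hp, hq]
    abel
  have hcc : c * c = 1 := by
    rw [hc, mul_assoc, ← mul_assoc (p + q - 1), hsd, mul_assoc d (p + q - 1),
      ← mul_assoc, hsquare, hdd]
    exact geom_series_mul_neg x hx1
  have hpc : p * c = c * q := by
    have hps : p * (p + q - 1) = p * q := by
      simp only [mul_add, mul_sub, mul_one, hp]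
      abel
    have hsq' : (p + q - 1) * q = p * q := by
      simp only [add_mul, sub_mul, one_mul, hq]
      abel
    rw [hc, ← mul_assoc, hpd, mul_assoc, hps, mul_assoc, hsq']
  refine ⟨hcc, hpc, ?_, ?_⟩
  · rw [mul_assoc, ← mul_assoc c c p, hcc, one_mul, hp]
  · rw [mul_assoc, ← mul_assoc p p c, hp, hpc, ← mul_assoc, hcc, one_mul]
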